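/- Let d ≥ 2. The set S := { M_x = (1 − x)·I + C_x : x ∈ ℝ^d, x_i ≥ 0 for all i, and 1 + x_i ≥ x for all i, where x = x_1 + ⋯ + x_d } of equal-input Markov matrices is a closed convex subset of the d×d real matrices, and its set of extreme points consists of exactly the d + 2 matrices C_{e_1}, …, C_{e_d}, the identity I, and (1/(d−1))·(C_𝟙 − I), where e_i is the i-th standard unit row vector and 𝟙 = (1,…,1). -/

import Mathlib

open Matrix

/-- `eqRows d x` is the `d × d` real matrix all of whose rows equal the row vector `x`. -/
def eqRows (d : ℕ) (x : Fin d → ℝ) : Matrix (Fin d) (Fin d) ℝ :=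
  Matrix.of fun _ j => x j

/-- The set of equal-input Markov matrices `M_x = (1 − x)·I + C_x` with `xᵢ ≥ 0`
and `1 + xᵢ ≥ x` for all `i`, where `x = ∑ⱼ xⱼ`. -/
def eqInputMarkov (d : ℕ) : Set (Matrix (Fin d) (Fin d) ℝ) :=
  {M | ∃ x : Fin d → ℝ, (∀ i, 0 ≤ x i) ∧ (∀ i, ∑ j, x j ≤ 1 + x i) ∧
    M = (1 - ∑ j, x j) • (1 : Matrix (Fin d) (Fin d) ℝ) + eqRows d x}

namespace Stmt3

variable (d : ℕ)

def P : Set (Fin d → ℝ) := {x | (∀ i, 0 ≤ x i) ∧ ∀ i, ∑ j, x j ≤ 1 + x i}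

noncomputable def φ : (Fin d → ℝ) → Matrix (Fin d) (Fin d) ℝ :=
  fun x => (1 - ∑ j, x j) • (1 : Matrix (Fin d) (Fin d) ℝ) + eqRows d x

lemma φ_apply (x : Fin d → ℝ) (i j : Fin d) :
    φ d x i j = (if i = j then 1 - ∑ k, x k else 0) + x j := by
  simp [φ, eqRows, Matrix.add_apply, Matrix.smul_apply, Matrix.one_apply, mul_ite]

lemma image_eq : eqInputMarkov d = φ d '' P d := by
  ext M
  constructor
  · rintro ⟨x, h1, h2, rfl⟩; exact ⟨x, ⟨h1, h2⟩, rfl⟩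
  · rintro ⟨x, ⟨h1, h2⟩, rfl⟩; exact ⟨x, h1, h2, rfl⟩

lemma φ_affine {a b : ℝ} (hab : a + b = 1) (x y : Fin d → ℝ) :
    φ d (a • x + b • y) = a • φ d x + b • φ d y := by
  ext i j
  have hsum : ∑ k, (a • x + b • y) k = a * ∑ k, x k + b * ∑ k, y k := by
    simp [Finset.sum_add_distrib, Finset.mul_sum]
  simp only [Matrix.add_apply, Matrix.smul_apply, φ_apply, hsum, Pi.add_apply,
    Pi.smul_apply, smul_eq_mul]
  rw [Finset.sum_add_distrib, ← Finset.mul_sum, ← Finset.mul_sum]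
  split_ifs
  · linear_combination -hab
  · ring

lemma φ_inj (hd : 2 ≤ d) : Function.Injective (φ d) := by
  intro x y h
  funext j
  obtain ⟨i, hij⟩ := Fintype.exists_ne_of_one_lt_card (by simp; omega) j
  have h2 := congrFun (congrFun h i) j
  simpa [φ_apply, hij] using h2

lemma extremePoints_image (hd : 2 ≤ d) :
    Set.extremePoints ℝ (φ d '' P d) = φ d '' Set.extremePoints ℝ (P d) := by
  ext M
  constructor
  · rintro ⟨⟨x, hxP, rfl⟩, hext⟩
    refine ⟨x, ⟨hxP, ?_⟩, rfl⟩
    rintro y hy z hz ⟨a, b, ha, hb, hab, habx⟩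
    have h := hext ⟨y, hy, rfl⟩ ⟨z, hz, rfl⟩
      ⟨a, b, ha, hb, hab, by rw [← φ_affine d hab, habx]⟩
    exact φ_inj d hd h
  · rintro ⟨x, ⟨hxP, hext⟩, rfl⟩
    refine ⟨⟨x, hxP, rfl⟩, ?_⟩
    rintro M1 ⟨y, hy, rfl⟩ M2 ⟨z, hz, rfl⟩ ⟨a, b, ha, hb, hab, habx⟩
    have hx : a • y + b • z = x := φ_inj d hd (by rw [φ_affine d hab, habx])
    have h1 := hext hy hz ⟨a, b, ha, hb, hab, hx⟩
    rw [h1]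


lemma P_closed : IsClosed (P d) := by
  have h : P d = (⋂ i, {x : Fin d → ℝ | 0 ≤ x i}) ∩
      ⋂ i, {x : Fin d → ℝ | ∑ j, x j ≤ 1 + x i} := by
    ext x; simp [P, Set.mem_iInter]
  rw [h]
  refine IsClosed.inter (isClosed_iInter fun i => ?_) (isClosed_iInter fun i => ?_)
  · exact isClosed_le continuous_const (continuous_apply i)
  · exact isClosed_le (continuous_finset_sum _ fun j _ => continuous_apply j)
      (continuous_const.add (continuous_apply i))

lemma P_compact (hd : 2 ≤ d) : IsCompact (P d) := by
  refine IsCompact.of_isClosed_subset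
    (isCompact_univ_pi fun _ => isCompact_Icc (a := (0:ℝ)) (b := 1)) (P_closed d) ?_
  intro x hx i _
  refine ⟨hx.1 i, ?_⟩
  obtain ⟨k, hk⟩ := Fintype.exists_ne_of_one_lt_card (by simp; omega) i
  have h1 : x i + x k ≤ ∑ j, x j := by
    have h2 : ∑ j ∈ ({i, k} : Finset (Fin d)), x j ≤ ∑ j, x j :=
      Finset.sum_le_sum_of_subset_of_nonneg (Finset.subset_univ _)
        (fun j _ _ => hx.1 j)
    rwa [Finset.sum_pair (Ne.symm hk)] at h2
  have h3 := hx.2 k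
  have h4 := hx.1 k
  linarith

lemma φ_cont : Continuous (φ d) := by
  apply continuous_matrix
  intro i j
  simp only [φ_apply]
  refine Continuous.add ?_ (continuous_apply j)
  by_cases h : i = j
  · simp only [if_pos h]
    exact continuous_const.sub (continuous_finset_sum _ fun k _ => continuous_apply k)
  · simp only [if_neg h]; exact continuous_const

lemma P_convex : Convex ℝ (P d) := by
  intro y hy z hz a b ha hb hab
  constructor
  · intro i
    simp only [Pi.add_apply, Pi.smul_apply, smul_eq_mul]
    exact add_nonneg (mul_nonneg ha (hy.1 i)) (mul_nonneg hb (hz.1 i))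
  · intro i
    have hsum : ∑ k, (a • y + b • z) k = a * ∑ k, y k + b * ∑ k, z k := by
      simp [Finset.sum_add_distrib, Finset.mul_sum]
    rw [hsum]
    simp only [Pi.add_apply, Pi.smul_apply, smul_eq_mul]
    nlinarith [mul_le_mul_of_nonneg_left (hy.2 i) ha, mul_le_mul_of_nonneg_left (hz.2 i) hb]

lemma pert_mem (hd : 2 ≤ d) (x w : Fin d → ℝ) (hx : x ∈ P d)
    (hpos : ∀ j, w j ≠ 0 → 0 < x j)
    (hslack : ∀ j, (∑ k, w k) - w j ≠ 0 → ∑ k, x k < 1 + x j) :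
    ∃ ε : ℝ, 0 < ε ∧ ∀ σ : ℝ, |σ| ≤ ε → x + σ • w ∈ P d := by
  have hne : (Finset.univ : Finset (Fin d)).Nonempty := by
    have : Nonempty (Fin d) := ⟨⟨0, by omega⟩⟩
    exact Finset.univ_nonempty
  set b : Fin d → ℝ := fun j =>
    min (if w j = 0 then 1 else x j / |w j|)
      (if (∑ k, w k) - w j = 0 then 1 else (1 + x j - ∑ k, x k) / |(∑ k, w k) - w j|)
    with hb
  have hbpos : ∀ j, 0 < b j := by
    intro j
    refine lt_min ?_ ?_
    · split_ifs with h
      · norm_num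
      · exact div_pos (hpos j h) (abs_pos.mpr h)
    · split_ifs with h
      · norm_num
      · have := hslack j h
        exact div_pos (by linarith) (abs_pos.mpr h)
  refine ⟨Finset.univ.inf' hne b, ?_, ?_⟩
  · exact (Finset.lt_inf'_iff hne).mpr fun j _ => hbpos j
  · intro σ hσ
    have hεle : ∀ j, |σ| ≤ b j := fun j =>
      le_trans hσ (Finset.inf'_le b (Finset.mem_univ j))
    constructor
    · intro j
      simp only [Pi.add_apply, Pi.smul_apply, smul_eq_mul]
      by_cases hw : w j = 0
      · simp only [hw, mul_zero, add_zero]; exact hx.1 j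
      · have h1 := le_trans (hεle j) (min_le_left _ _)
        rw [if_neg hw] at h1
        have habs : 0 < |w j| := abs_pos.mpr hw
        have h2 : |σ| * |w j| ≤ x j := (le_div_iff₀ habs).mp h1
        have h3 : |σ * w j| = |σ| * |w j| := abs_mul _ _
        have h4 := neg_abs_le (σ * w j)
        linarith
    · intro j
      have hsum : ∑ k, (x + σ • w) k = (∑ k, x k) + σ * ∑ k, w k := by
        simp [Finset.sum_add_distrib, Finset.mul_sum]
      rw [hsum]
      simp only [Pi.add_apply, Pi.smul_apply, smul_eq_mul]
      by_cases hΔ0 : (∑ k, w k) - w j = 0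
      · have h1 : σ * (∑ k, w k) = σ * w j := by
          have := sub_eq_zero.mp hΔ0; rw [this]
        have := hx.2 j
        linarith
      · have h1 := le_trans (hεle j) (min_le_right _ _)
        rw [if_neg hΔ0] at h1
        have habs : 0 < |(∑ k, w k) - w j| := abs_pos.mpr hΔ0
        have h2 : |σ| * |(∑ k, w k) - w j| ≤ 1 + x j - ∑ k, x k :=
          (le_div_iff₀ habs).mp h1
        have h3 : σ * ((∑ k, w k) - w j) ≤ |σ * ((∑ k, w k) - w j)| := le_abs_self _
        have h4 : |σ * ((∑ k, w k) - w j)| = |σ| * |(∑ k, w k) - w j| := abs_mul _ _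
        nlinarith

lemma comb_eq {a b u v M : ℝ} (ha : 0 < a) (hb : 0 < b) (hab : a + b = 1)
    (hu : u ≤ M) (hv : v ≤ M) (h : a * u + b * v = M) : u = M ∧ v = M := by
  have hM : a * M + b * M = M := by rw [← add_mul, hab, one_mul]
  constructor
  · refine le_antisymm hu ?_
    nlinarith [mul_le_mul_of_nonneg_left hv hb.le]
  · refine le_antisymm hv ?_
    nlinarith [mul_le_mul_of_nonneg_left hu ha.le]

-- basic memberships
lemma zero_mem : (0 : Fin d → ℝ) ∈ P d := by
  constructor
  · intro i; simp
  · intro i; simp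

lemma single_mem (i : Fin d) : (Pi.single i 1 : Fin d → ℝ) ∈ P d := by
  constructor
  · intro j; by_cases h : j = i <;> simp [Pi.single_apply, h]
  · intro j
    rw [Finset.sum_pi_single']
    simp only [Finset.mem_univ, if_true]
    have : (0:ℝ) ≤ (Pi.single i 1 : Fin d → ℝ) j := by
      by_cases h : j = i <;> simp [Pi.single_apply, h]
    linarith

lemma hd1 (hd : 2 ≤ d) : (0:ℝ) < (d:ℝ) - 1 := by
  have : (2:ℝ) ≤ (d:ℝ) := by exact_mod_cast hd
  linarith

lemma sum_v : ∑ _j : Fin d, ((d:ℝ) - 1)⁻¹ = (d:ℝ) * ((d:ℝ) - 1)⁻¹ := by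
  rw [Finset.sum_const, Finset.card_univ, Fintype.card_fin, nsmul_eq_mul]

lemma v_mem (hd : 2 ≤ d) : (fun _ => ((d:ℝ) - 1)⁻¹ : Fin d → ℝ) ∈ P d := by
  have h1 := hd1 d hd
  constructor
  · intro i; positivity
  · intro i
    rw [sum_v]
    show (d:ℝ) * ((d:ℝ) - 1)⁻¹ ≤ 1 + ((d:ℝ) - 1)⁻¹
    have h2 : 1 + ((d:ℝ) - 1)⁻¹ - (d:ℝ) * ((d:ℝ) - 1)⁻¹ = 0 := by field_simp; ring
    linarith

-- forward: each candidate is an extreme point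
lemma zero_extreme : (0 : Fin d → ℝ) ∈ Set.extremePoints ℝ (P d) := by
  refine ⟨zero_mem d, ?_⟩
  rintro y hy z hz ⟨a, b, ha, hb, hab, habx⟩
  have hco : ∀ j, a * y j + b * z j = 0 := by
    intro j
    have := congrFun habx j
    simpa using this
  have hy0 : y = 0 := by
    funext j
    have h1 := hy.1 j; have h2 := hz.1 j; have := hco j
    simp only [Pi.zero_apply]
    nlinarith
  have hz0 : z = 0 := by
    funext j
    have h1 := hy.1 j; have h2 := hz.1 j; have := hco j
    simp only [Pi.zero_apply]
    nlinarith
  exact hy0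

lemma single_extreme (hd : 2 ≤ d) (i : Fin d) :
    (Pi.single i 1 : Fin d → ℝ) ∈ Set.extremePoints ℝ (P d) := by
  refine ⟨single_mem d i, ?_⟩
  rintro y hy z hz ⟨a, b, ha, hb, hab, habx⟩
  have hco : ∀ j, a * y j + b * z j = (Pi.single i 1 : Fin d → ℝ) j := by
    intro j
    have := congrFun habx j
    simpa using this
  have hzero : ∀ j, j ≠ i → y j = 0 ∧ z j = 0 := by
    intro j hj
    have := hco j
    rw [show (Pi.single i 1 : Fin d → ℝ) j = 0 from Pi.single_eq_of_ne hj 1] at this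
    have h1 := hy.1 j; have h2 := hz.1 j
    constructor <;> nlinarith
  obtain ⟨k, hk⟩ := Fintype.exists_ne_of_one_lt_card (by simp; omega) i
  have hyle : y i ≤ 1 := by
    have h1 : y i ≤ ∑ j, y j := Finset.single_le_sum (fun j _ => hy.1 j) (Finset.mem_univ i)
    have h2 := hy.2 k
    have h3 := (hzero k hk).1
    linarith
  have hzle : z i ≤ 1 := by
    have h1 : z i ≤ ∑ j, z j := Finset.single_le_sum (fun j _ => hz.1 j) (Finset.mem_univ i)
    have h2 := hz.2 k
    have h3 := (hzero k hk).2
    linarith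
  have hci := hco i
  rw [Pi.single_eq_same] at hci
  have hyi : y i = 1 := by nlinarith
  have hzi : z i = 1 := by nlinarith
  refine (?_ : _ ∧ z = Pi.single i 1).1
  constructor
  · funext j
    by_cases hj : j = i
    · subst hj; rw [Pi.single_eq_same]; exact hyi
    · rw [Pi.single_eq_of_ne hj]; exact (hzero j hj).1
  · funext j
    by_cases hj : j = i
    · subst hj; rw [Pi.single_eq_same]; exact hzi
    · rw [Pi.single_eq_of_ne hj]; exact (hzero j hj).2

lemma sum_le_of_mem (hd : 2 ≤ d) (y : Fin d → ℝ) (hy : y ∈ P d) :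
    ∑ j, y j ≤ (d:ℝ) * ((d:ℝ) - 1)⁻¹ := by
  have h1 := hd1 d hd
  have h2 : ∑ _i : Fin d, ∑ j, y j ≤ ∑ i, (1 + y i) :=
    Finset.sum_le_sum fun i _ => hy.2 i
  rw [Finset.sum_const, Finset.card_univ, Fintype.card_fin, nsmul_eq_mul,
    Finset.sum_add_distrib, Finset.sum_const, Finset.card_univ, Fintype.card_fin,
    nsmul_eq_mul, mul_one] at h2
  rw [show (d:ℝ) * ((d:ℝ) - 1)⁻¹ = (d:ℝ) / ((d:ℝ) - 1) from by ring, le_div_iff₀ h1]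
  nlinarith [h2]

lemma v_extreme (hd : 2 ≤ d) :
    (fun _ => ((d:ℝ) - 1)⁻¹ : Fin d → ℝ) ∈ Set.extremePoints ℝ (P d) := by
  have h1 := hd1 d hd
  refine ⟨v_mem d hd, ?_⟩
  rintro y hy z hz ⟨a, b, ha, hb, hab, habx⟩
  have hS : a * ∑ j, y j + b * ∑ j, z j = (d:ℝ) * ((d:ℝ) - 1)⁻¹ := by
    have := congrArg (fun f => ∑ j, f j) habx
    simpa [Finset.sum_add_distrib, Finset.mul_sum, sum_v] using this
  obtain ⟨hyS, hzS⟩ := comb_eq ha hb hab (sum_le_of_mem d hd y hy)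
    (sum_le_of_mem d hd z hz) hS
  have key : ∀ (u : Fin d → ℝ), u ∈ P d → ∑ j, u j = (d:ℝ) * ((d:ℝ) - 1)⁻¹ →
      u = fun _ => ((d:ℝ) - 1)⁻¹ := by
    intro u hu hsu
    have hzero : ∑ i, (1 + u i - ∑ j, u j) = 0 := by
      rw [Finset.sum_sub_distrib, Finset.sum_add_distrib, Finset.sum_const,
        Finset.sum_const, Finset.card_univ, Fintype.card_fin, nsmul_eq_mul,
        nsmul_eq_mul, mul_one, hsu]
      field_simp
      ring
    have heach := (Finset.sum_eq_zero_iff_of_nonneg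
      (fun i _ => by linarith [hu.2 i])).mp hzero
    funext i
    have := heach i (Finset.mem_univ i)
    rw [hsu] at this
    have : u i = (d:ℝ) * ((d:ℝ) - 1)⁻¹ - 1 := by linarith
    rw [this]
    field_simp
    ring
  exact key y hy hyS


lemma extreme_subset (hd : 2 ≤ d) (x : Fin d → ℝ)
    (hx : x ∈ Set.extremePoints ℝ (P d)) :
    x ∈ (Set.range fun i : Fin d => (Pi.single i 1 : Fin d → ℝ)) ∪
      {0, fun _ => ((d:ℝ) - 1)⁻¹} := by
  obtain ⟨⟨hx0, hx1⟩, hext⟩ := hx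
  simp only [Set.mem_union, Set.mem_range, Set.mem_insert_iff, Set.mem_singleton_iff]
  -- key: any admissible direction is zero
  have dir : ∀ w : Fin d → ℝ, (∀ j, w j ≠ 0 → 0 < x j) →
      (∀ j, (∑ k, w k) - w j ≠ 0 → ∑ k, x k < 1 + x j) → w = 0 := by
    intro w hpos hslack
    obtain ⟨ε, hε, hmem⟩ := pert_mem d hd x w ⟨hx0, hx1⟩ hpos hslack
    have hp : x + ε • w ∈ P d := hmem ε (by rw [abs_of_pos hε])
    have hm : x + (-ε) • w ∈ P d := hmem (-ε) (by rw [abs_neg, abs_of_pos hε])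
    have hm' : x - ε • w ∈ P d := by
      rw [show x - ε • w = x + (-ε) • w by module]
      exact hm
    have hseg : x ∈ openSegment ℝ (x - ε • w) (x + ε • w) :=
      ⟨1/2, 1/2, by norm_num, by norm_num, by norm_num, by module⟩
    have h := hext hm' hp hseg
    have h0 : ε • w = 0 := sub_eq_self.mp h
    rcases smul_eq_zero.mp h0 with h | h
    · exact absurd h hε.ne'
    · exact h
  by_cases hT : ∀ j, ∑ k, x k < 1 + x j
  · -- no tight constraint : x = 0
    exact Or.inr (Or.inl (dir x (fun j h => lt_of_le_of_ne (hx0 j) (Ne.symm h))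
      (fun j _ => hT j)))
  · push_neg at hT
    obtain ⟨m, hm⟩ := hT
    have hms : ∑ k, x k = 1 + x m := le_antisymm (hx1 m) hm
    have hs1 : 1 ≤ ∑ k, x k := by have := hx0 m; linarith
    rcases eq_or_lt_of_le hs1 with hs | hs
    · -- sum = 1 : x is a standard basis vector
      left
      have hpos_ex : ∃ k, 0 < x k := by
        by_contra h
        push_neg at h
        have : ∑ k, x k ≤ 0 := Finset.sum_nonpos fun k _ => h k
        linarith
      obtain ⟨k, hk⟩ := hpos_ex
      have hzero : ∀ j, j ≠ k → x j = 0 := by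
        intro j hjk
        by_contra hj
        have hjpos : 0 < x j := lt_of_le_of_ne (hx0 j) (Ne.symm hj)
        have hw : ((Pi.single j 1 - Pi.single k 1 : Fin d → ℝ)) = 0 := by
          apply dir
          · intro l hl
            have hcase : l = j ∨ l = k := by
              by_contra hc
              push_neg at hc
              apply hl
              simp [Pi.sub_apply, Pi.single_apply, hc.1, hc.2]
            rcases hcase with h1 | h1
            · subst h1; exact hjpos
            · subst h1; exact hk
          · intro l hl
            have hsw : ∑ k', (Pi.single j 1 - Pi.single k 1 : Fin d → ℝ) k' = 0 := by
              simp [Finset.sum_sub_distrib, Finset.sum_pi_single']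
            rw [hsw, zero_sub, neg_ne_zero] at hl
            have hcase : l = j ∨ l = k := by
              by_contra hc
              push_neg at hc
              apply hl
              simp [Pi.sub_apply, Pi.single_apply, hc.1, hc.2]
            have hlpos : 0 < x l := by
              rcases hcase with h1 | h1
              · subst h1; exact hjpos
              · subst h1; exact hk
            linarith
        have := congrFun hw j
        simp [Pi.single_apply, hjk] at this
      have hxk : x k = 1 := by
        have h2 : ∑ j, x j = x k := Finset.sum_eq_single k (fun j _ hj => hzero j hj)
          (fun h => absurd (Finset.mem_univ k) h)
        linarith
      refine ⟨k, ?_⟩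
      funext j
      by_cases hj : j = k
      · subst hj; rw [Pi.single_eq_same, hxk]
      · rw [Pi.single_eq_of_ne hj]; exact (hzero j hj).symm
    · -- sum > 1 : x = v
      have hall : ∀ j, 0 < x j := by
        intro j
        have := hx1 j
        linarith
      have hw : (((fun _ => ((d:ℝ) - 1)⁻¹) - x : Fin d → ℝ)) = 0 := by
        apply dir
        · exact fun j _ => hall j
        · intro l hl
          refine lt_of_le_of_ne (hx1 l) fun heq => hl ?_
          have h1 := hd1 d hd
          have hsw : ∑ k', ((fun _ => ((d:ℝ) - 1)⁻¹) - x : Fin d → ℝ) k' =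
              (d:ℝ) * ((d:ℝ) - 1)⁻¹ - ∑ k, x k := by
            simp only [Pi.sub_apply]
            rw [Finset.sum_sub_distrib, sum_v]
          rw [hsw]
          simp only [Pi.sub_apply]
          have hc : (d:ℝ) * ((d:ℝ) - 1)⁻¹ - ((d:ℝ) - 1)⁻¹ = 1 := by field_simp
          linarith
      refine Or.inr (Or.inr ?_)
      funext j
      have := congrFun hw j
      simp only [Pi.sub_apply, Pi.zero_apply] at this
      linarith


lemma extremePoints_P (hd : 2 ≤ d) :
    Set.extremePoints ℝ (P d) =
      (Set.range fun i : Fin d => (Pi.single i 1 : Fin d → ℝ)) ∪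
        {0, fun _ => ((d:ℝ) - 1)⁻¹} := by
  apply Set.Subset.antisymm
  · exact fun x hx => extreme_subset d hd x hx
  · rintro x (⟨i, rfl⟩ | rfl | rfl)
    · exact single_extreme d hd i
    · exact zero_extreme d
    · exact v_extreme d hd

lemma φ_zero : φ d 0 = 1 := by
  ext i j
  rw [φ_apply]
  simp [Matrix.one_apply]

lemma φ_single (i : Fin d) : φ d (Pi.single i 1) = eqRows d (Pi.single i 1) := by
  ext a b
  rw [φ_apply]
  simp [eqRows, Finset.sum_pi_single']

lemma φ_v (hd : 2 ≤ d) :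
    φ d (fun _ => ((d:ℝ) - 1)⁻¹) =
      ((d:ℝ) - 1)⁻¹ • (eqRows d (fun _ => 1) - 1) := by
  have h1 := hd1 d hd
  ext a b
  rw [φ_apply, sum_v]
  simp only [eqRows, Matrix.smul_apply, Matrix.sub_apply, Matrix.one_apply,
    Matrix.of_apply, smul_eq_mul]
  split_ifs with h
  · field_simp
    ring
  · ring

end Stmt3

/-- for `d ≥ 2`, the set of equal-input Markov matrices is closed and convex,
and its extreme points are exactly the `d + 2` matrices `C_{e₁}, …, C_{e_d}`, `I`, and
`(1/(d−1))·(C_𝟙 − I)`. -/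
theorem stmt3 (d : ℕ) (hd : 2 ≤ d) :
    IsClosed (eqInputMarkov d) ∧ Convex ℝ (eqInputMarkov d) ∧
      Set.extremePoints ℝ (eqInputMarkov d) =
        (Set.range fun i : Fin d => eqRows d (Pi.single i 1)) ∪
          {(1 : Matrix (Fin d) (Fin d) ℝ),
            ((d : ℝ) - 1)⁻¹ • (eqRows d (fun _ => 1) - 1)} := by
  open Stmt3 in
  refine ⟨?_, ?_, ?_⟩
  · rw [image_eq d]
    exact ((P_compact d hd).image (φ_cont d)).isClosed
  · rw [image_eq d]
    intro M1 hM1 M2 hM2 a b ha hb hab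
    obtain ⟨y, hy, rfl⟩ := hM1
    obtain ⟨z, hz, rfl⟩ := hM2
    exact ⟨a • y + b • z, P_convex d hy hz ha hb hab, φ_affine d hab y z⟩
  · rw [image_eq d, extremePoints_image d hd, extremePoints_P d hd, Set.image_union,
      Set.image_insert_eq, Set.image_singleton, ← Set.range_comp]
    have hfun : (φ d) ∘ (fun i : Fin d => (Pi.single i 1 : Fin d → ℝ)) =
        fun i : Fin d => eqRows d (Pi.single i 1) := funext fun i => φ_single d i
    rw [hfun, φ_zero, φ_v d hd]
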